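/- Let Q be an n×n symmetric matrix with nonnegative entries admitting a factorization Q = U·Uᵀ with U an entrywise nonnegative n×r matrix, let C ≥ 0, and let [n] = 𝒰 ⊔ N be a partition of the index set. Suppose x* ∈ [0,1]^N satisfies the feasibility condition 1_𝒰ᵀ·Q[𝒰,𝒰]·1_𝒰 + 2·1_𝒰ᵀ·Q[𝒰,N]·x* + (x*)ᵀ·Q[N,N]·x* ≤ C². Define t := U[N,*]ᵀ·x* ∈ ℝ^r and t' := 1_𝒰ᵀ·Q[𝒰,N]·x* ∈ ℝ. Then for every y ∈ [0,1]^N with U[N,*]ᵀ·y ≤ t componentwise and 1_𝒰ᵀ·Q[𝒰,N]·y ≤ t', the vector x̄ ∈ [0,1]^n defined by x̄_k = 1 for k ∈ 𝒰 and x̄_k = y_k for k ∈ N satisfies x̄ᵀ·Q·x̄ ≤ C². -/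

import Mathlib

open Matrix

/-- Rounding feasibility step of the PTAS for linear packing with one quadratic constraint:
with `Q = U Uᵀ` entrywise nonnegative, a partition `[n] = 𝒰 ⊔ N`, and a fractional point
`x* ∈ [0,1]^N` feasible for `x̄ᵀ Q x̄ ≤ C²` (with the `𝒰`-coordinates set to `1`), any
`y ∈ [0,1]^N` with `U[N]ᵀ y ≤ U[N]ᵀ x*` componentwise and `1_𝒰ᵀ Q[𝒰,N] y ≤ 1_𝒰ᵀ Q[𝒰,N] x*`
yields a point `x̄` (equal to `1` on `𝒰` and to `y` on `N`) with `x̄ᵀ Q x̄ ≤ C²`. -/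
theorem rounded_point_feasible (n r : ℕ)
    (Q : Matrix (Fin n) (Fin n) ℝ) (hsym : Q.IsSymm) (hQnn : ∀ i j, 0 ≤ Q i j)
    (U : Matrix (Fin n) (Fin r) ℝ) (hUnn : ∀ i j, 0 ≤ U i j)
    (hfac : U * Uᵀ = Q)
    (C : ℝ) (hC : 0 ≤ C)
    (𝒰 N : Finset (Fin n)) (hdisj : Disjoint 𝒰 N) (hcover : 𝒰 ∪ N = Finset.univ)
    (x : Fin n → ℝ) (hx : ∀ k ∈ N, 0 ≤ x k ∧ x k ≤ 1)
    (hfeas : (∑ i ∈ 𝒰, ∑ j ∈ 𝒰, Q i j)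
        + 2 * (∑ i ∈ 𝒰, ∑ j ∈ N, Q i j * x j)
        + (∑ i ∈ N, ∑ j ∈ N, x i * Q i j * x j) ≤ C^2)
    (y : Fin n → ℝ) (hy : ∀ k ∈ N, 0 ≤ y k ∧ y k ≤ 1)
    (hyt : ∀ p : Fin r, (∑ k ∈ N, U k p * y k) ≤ ∑ k ∈ N, U k p * x k)
    (hyt' : (∑ i ∈ 𝒰, ∑ j ∈ N, Q i j * y j) ≤ ∑ i ∈ 𝒰, ∑ j ∈ N, Q i j * x j)
    (xb : Fin n → ℝ) (hxb : ∀ k, xb k = if k ∈ 𝒰 then 1 else y k) :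
    ∑ i, ∑ j, xb i * Q i j * xb j ≤ C^2 := by
  have hxb1 : ∀ k ∈ 𝒰, xb k = 1 := fun k hk => by rw [hxb k, if_pos hk]
  have hxby : ∀ k ∈ N, xb k = y k := fun k hk => by
    rw [hxb k, if_neg (fun h => Finset.disjoint_left.mp hdisj h hk)]
  have hsplit : ∀ f : Fin n → ℝ, ∑ k, f k = ∑ k ∈ 𝒰, f k + ∑ k ∈ N, f k := by
    intro f; rw [← Finset.sum_union hdisj, hcover]
  have hQ : ∀ i j, Q i j = ∑ p, U i p * U j p := by
    intro i j; rw [← hfac]; simp [Matrix.mul_apply, Matrix.transpose_apply]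
  -- quadratic form on N via factorization
  have quad : ∀ z : Fin n → ℝ, ∑ i ∈ N, ∑ j ∈ N, z i * Q i j * z j
      = ∑ p : Fin r, (∑ k ∈ N, U k p * z k)^2 := by
    intro z
    have hsq : ∀ p : Fin r, (∑ k ∈ N, U k p * z k)^2
        = ∑ i ∈ N, ∑ j ∈ N, (U i p * z i) * (U j p * z j) := by
      intro p; rw [pow_two, Finset.sum_mul_sum N N (fun i => U i p * z i) (fun j => U j p * z j)]
    simp_rw [hsq]
    rw [Finset.sum_comm (s := (Finset.univ : Finset (Fin r))) (t := N)
      (f := fun p i => ∑ j ∈ N, (U i p * z i) * (U j p * z j))]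
    refine Finset.sum_congr rfl fun i _ => ?_
    rw [Finset.sum_comm (s := (Finset.univ : Finset (Fin r))) (t := N)
      (f := fun p j => (U i p * z i) * (U j p * z j))]
    refine Finset.sum_congr rfl fun j _ => ?_
    rw [hQ, Finset.mul_sum, Finset.sum_mul]
    exact Finset.sum_congr rfl fun p _ => by ring
  have hyQy : (∑ i ∈ N, ∑ j ∈ N, y i * Q i j * y j)
      ≤ ∑ i ∈ N, ∑ j ∈ N, x i * Q i j * x j := by
    rw [quad y, quad x]
    refine Finset.sum_le_sum fun p _ => ?_
    have hny : 0 ≤ ∑ k ∈ N, U k p * y k :=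
      Finset.sum_nonneg fun k hk => mul_nonneg (hUnn k p) (hy k hk).1
    exact pow_le_pow_left₀ hny (hyt p) 2
  -- split the total sum
  have hAA : ∑ i ∈ 𝒰, ∑ j ∈ 𝒰, xb i * Q i j * xb j = ∑ i ∈ 𝒰, ∑ j ∈ 𝒰, Q i j := by
    refine Finset.sum_congr rfl fun i hi => Finset.sum_congr rfl fun j hj => ?_
    rw [hxb1 i hi, hxb1 j hj]; ring
  have hAN : ∑ i ∈ 𝒰, ∑ j ∈ N, xb i * Q i j * xb j = ∑ i ∈ 𝒰, ∑ j ∈ N, Q i j * y j := by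
    refine Finset.sum_congr rfl fun i hi => Finset.sum_congr rfl fun j hj => ?_
    rw [hxb1 i hi, hxby j hj]; ring
  have hNA : ∑ i ∈ N, ∑ j ∈ 𝒰, xb i * Q i j * xb j = ∑ i ∈ 𝒰, ∑ j ∈ N, Q i j * y j := by
    rw [Finset.sum_comm]
    refine Finset.sum_congr rfl fun i hi => Finset.sum_congr rfl fun j hj => ?_
    have : Q j i = Q i j := by
      have := congrFun (congrFun hsym i) j
      simpa [Matrix.transpose_apply] using this
    rw [hxb1 i hi, hxby j hj, this]; ring
  have hNN : ∑ i ∈ N, ∑ j ∈ N, xb i * Q i j * xb j = ∑ i ∈ N, ∑ j ∈ N, y i * Q i j * y j := by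
    refine Finset.sum_congr rfl fun i hi => Finset.sum_congr rfl fun j hj => ?_
    rw [hxby i hi, hxby j hj]
  calc ∑ i, ∑ j, xb i * Q i j * xb j
      = (∑ i ∈ 𝒰, ∑ j, xb i * Q i j * xb j) + ∑ i ∈ N, ∑ j, xb i * Q i j * xb j :=
        hsplit _
    _ = ((∑ i ∈ 𝒰, ∑ j ∈ 𝒰, xb i * Q i j * xb j) + ∑ i ∈ 𝒰, ∑ j ∈ N, xb i * Q i j * xb j)
        + ((∑ i ∈ N, ∑ j ∈ 𝒰, xb i * Q i j * xb j) + ∑ i ∈ N, ∑ j ∈ N, xb i * Q i j * xb j) := by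
        rw [← Finset.sum_add_distrib, ← Finset.sum_add_distrib]
        exact congrArg₂ (· + ·) (Finset.sum_congr rfl fun i _ => hsplit _)
          (Finset.sum_congr rfl fun i _ => hsplit _)
    _ = (∑ i ∈ 𝒰, ∑ j ∈ 𝒰, Q i j) + 2 * (∑ i ∈ 𝒰, ∑ j ∈ N, Q i j * y j)
        + (∑ i ∈ N, ∑ j ∈ N, y i * Q i j * y j) := by
        rw [hAA, hAN, hNA, hNN]; ring
    _ ≤ C^2 := by linarith
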